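/- Let 0 < α < 2 and r > 0, and let v be a lower semi-continuous function on the closure of a bounded open set Ω ⊂ ℝⁿ, with v ≥ 0 on ℝⁿ \ Ω and (−Δ)^(α/2) v ≥ 0 in Ω (in the viscosity/distributional sense). If both v and −v satisfy these hypotheses (i.e. v is continuous, (−Δ)^(α/2) v = 0 in Ω, and v = 0 outside Ω), then v ≡ 0 on ℝⁿ. -/

import Mathlib

/-- `v` has fractional Laplacian `(-Δ)^(α/2) v (x) = L` at `x`, defined as the
principal-value limit of the singular integral. -/
def hasFracLapAt (n : ℕ) (α : ℝ) (v : EuclideanSpace ℝ (Fin n) → ℝ)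
    (x : EuclideanSpace ℝ (Fin n)) (L : ℝ) : Prop :=
  Filter.Tendsto
    (fun ε : ℝ => ∫ y in {y : EuclideanSpace ℝ (Fin n) | ε < dist x y},
      (v x - v y) / dist x y ^ ((n : ℝ) + α))
    (nhdsWithin 0 (Set.Ioi 0)) (nhds L)

open MeasureTheory Filter Set Metric Bornology

lemma aux_max_principle (α : ℝ) (hα0 : 0 < α) (n : ℕ) (hn : 1 ≤ n)
    (Ω : Set (EuclideanSpace ℝ (Fin n))) (hΩo : IsOpen Ω) (hΩb : Bornology.IsBounded Ω)
    (v : EuclideanSpace ℝ (Fin n) → ℝ) (hc : Continuous v)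
    (hout : ∀ x ∉ Ω, v x = 0)
    (hharm : ∀ x ∈ Ω, hasFracLapAt n α v x 0) :
    ∀ x, v x ≤ 0 := by
  by_contra h
  push_neg at h
  obtain ⟨z, hz⟩ := h
  have hzΩ : z ∈ Ω := by
    by_contra hzc
    rw [hout z hzc] at hz
    exact lt_irrefl 0 hz
  -- max over closure of Ω
  have hK : IsCompact (closure Ω) := hΩb.isCompact_closure
  obtain ⟨x₀, hx₀K, hmax⟩ := hK.exists_isMaxOn ⟨z, subset_closure hzΩ⟩ hc.continuousOn
  set M : ℝ := v x₀ with hMdef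
  have hM : 0 < M := lt_of_lt_of_le hz (hmax (subset_closure hzΩ))
  have hmax' : ∀ y, v y ≤ M := by
    intro y
    by_cases hy : y ∈ closure Ω
    · exact hmax hy
    · rw [hout y (fun h => hy (subset_closure h))]; exact hM.le
  have hx₀Ω : x₀ ∈ Ω := by
    by_contra hx
    rw [hMdef] at hM
    rw [hout x₀ hx] at hM
    exact lt_irrefl 0 hM
  -- global bound on |v|
  obtain ⟨x₁, _, hmaxabs⟩ := hK.exists_isMaxOn ⟨z, subset_closure hzΩ⟩
    (continuous_abs.comp hc).continuousOn
  set C : ℝ := |v x₁| with hCdef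
  have hC0 : 0 ≤ C := abs_nonneg _
  have hCb : ∀ y, |v y| ≤ C := by
    intro y
    by_cases hy : y ∈ closure Ω
    · exact hmaxabs hy
    · rw [hout y (fun h => hy (subset_closure h))]; simpa using hC0
  set p : ℝ := (n : ℝ) + α with hpdef
  have hp0 : 0 < p := by positivity
  have hfinrank : (Module.finrank ℝ (EuclideanSpace ℝ (Fin n)) : ℝ) < p := by
    rw [finrank_euclideanSpace_fin]
    simp only [hpdef]
    linarith
  set f : EuclideanSpace ℝ (Fin n) → ℝ := fun y => (v x₀ - v y) / dist x₀ y ^ p with hfdef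
  have hfnonneg : ∀ y, 0 ≤ f y := fun y =>
    div_nonneg (sub_nonneg.2 (hmax' y)) (Real.rpow_nonneg dist_nonneg _)
  have hfmeas : Measurable f := by
    apply Measurable.div
    · exact (measurable_const.sub hc.measurable)
    · exact ((continuous_const.dist continuous_id).rpow_const (fun y => Or.inr hp0.le)).measurable
  -- integrability on {ε < dist x₀ y} for every ε > 0
  have hSopen : ∀ ε : ℝ, IsOpen {y : EuclideanSpace ℝ (Fin n) | ε < dist x₀ y} :=
    fun ε => isOpen_lt continuous_const (continuous_const.dist continuous_id)
  have hInt : ∀ ε : ℝ, 0 < ε →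
      IntegrableOn f {y : EuclideanSpace ℝ (Fin n) | ε < dist x₀ y} := by
    intro ε hε
    set g : EuclideanSpace ℝ (Fin n) → ℝ :=
      fun y => (2 * C * (1 + 1/ε) ^ p) * (1 + ‖y - x₀‖) ^ (-p) with hgdef
    have hg : Integrable g := by
      have h1 : Integrable (fun y : EuclideanSpace ℝ (Fin n) => (1 + ‖y‖) ^ (-p)) volume :=
        integrable_one_add_norm hfinrank
      exact (h1.comp_sub_right x₀).const_mul _
    apply Integrable.mono' hg.integrableOn (hfmeas.aestronglyMeasurable.restrict)
    rw [ae_restrict_iff' (hSopen ε).measurableSet]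
    apply ae_of_all
    intro y hy
    have hd : ε < dist x₀ y := hy
    have hd0 : 0 < dist x₀ y := hε.trans hd
    have hdp : 0 < dist x₀ y ^ p := Real.rpow_pos_of_pos hd0 _
    have hnum : |v x₀ - v y| ≤ 2 * C := by
      calc |v x₀ - v y| ≤ |v x₀| + |v y| := abs_sub _ _
        _ ≤ C + C := add_le_add (hCb _) (hCb _)
        _ = 2 * C := by ring
    have key : (1 + dist x₀ y) ^ p ≤ (1 + 1/ε) ^ p * dist x₀ y ^ p := by
      rw [← Real.mul_rpow (by positivity) dist_nonneg]
      apply Real.rpow_le_rpow (by positivity) _ hp0.le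
      have h1 : (1:ℝ) ≤ (1/ε) * dist x₀ y := by
        rw [one_div, inv_mul_eq_div, le_div_iff₀ hε]
        simpa using hd.le
      have h2 : (0:ℝ) < 1/ε := by positivity
      nlinarith
    have hden : (dist x₀ y) ^ (-p) ≤ (1 + 1/ε) ^ p * (1 + dist x₀ y) ^ (-p) := by
      rw [Real.rpow_neg dist_nonneg, Real.rpow_neg (by positivity), ← div_eq_mul_inv,
        le_div_iff₀ (by positivity), inv_mul_eq_div, div_le_iff₀ hdp]
      linarith
    have hnorm : ‖f y‖ = |v x₀ - v y| * (dist x₀ y) ^ (-p) := by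
      rw [Real.norm_eq_abs, hfdef]
      simp only []
      rw [abs_div, abs_of_nonneg hdp.le, div_eq_mul_inv, ← Real.rpow_neg dist_nonneg]
    have hdisteq : ‖y - x₀‖ = dist x₀ y := by rw [← dist_eq_norm, dist_comm]
    calc ‖f y‖ = |v x₀ - v y| * (dist x₀ y) ^ (-p) := hnorm
      _ ≤ (2 * C) * ((1 + 1/ε) ^ p * (1 + dist x₀ y) ^ (-p)) := by
          apply mul_le_mul hnum hden (Real.rpow_nonneg dist_nonneg _) (by positivity)
      _ = g y := by rw [hgdef]; simp only []; rw [hdisteq]; ring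
  -- choose R with Ω ⊆ ball x₀ R, R ≥ 1
  obtain ⟨R₀, hR₀⟩ := hΩb.subset_ball x₀
  set R : ℝ := max R₀ 1 with hRdef
  have hR1 : (1:ℝ) ≤ R := le_max_right _ _
  have hΩR : Ω ⊆ ball x₀ R := hR₀.trans (ball_subset_ball (le_max_left _ _))
  -- annulus
  set A : Set (EuclideanSpace ℝ (Fin n)) := ball x₀ (R+1) \ closedBall x₀ R with hAdef
  have hAopen : IsOpen A := isOpen_ball.sdiff Metric.isClosed_closedBall
  have hAne : A.Nonempty := by
    refine ⟨x₀ + EuclideanSpace.single (⟨0, hn⟩ : Fin n) (R + 1/2), ?_⟩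
    have hdist : dist (x₀ + EuclideanSpace.single (⟨0, hn⟩ : Fin n) (R + 1/2)) x₀
        = R + 1/2 := by
      rw [dist_comm, dist_self_add_right, EuclideanSpace.norm_single, Real.norm_eq_abs,
        abs_of_pos (by linarith)]
    constructor
    · rw [mem_ball, hdist]; linarith
    · rw [mem_closedBall, hdist]; push_neg; linarith
  have hAvolpos : 0 < volume A := hAopen.measure_pos volume hAne
  have hAvollt : volume A < ⊤ :=
    lt_of_le_of_lt (measure_mono (Set.diff_subset)) measure_ball_lt_top
  set c : ℝ := (M / (R+1) ^ p) * (volume A).toReal with hcdef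
  have hc0 : 0 < c := by
    apply mul_pos
    · exact div_pos hM (Real.rpow_pos_of_pos (by linarith) _)
    · exact ENNReal.toReal_pos hAvolpos.ne' hAvollt.ne
  have hA_sub : A ⊆ {y | 1 < dist x₀ y} := by
    intro y hy
    have h1 : R < dist y x₀ := by
      by_contra hle; push_neg at hle; exact hy.2 (mem_closedBall.mpr hle)
    simp only [mem_setOf_eq, dist_comm x₀ y]
    linarith
  have hfA : ∀ y ∈ A, M / (R+1) ^ p ≤ f y := by
    intro y hy
    have hyΩ : y ∉ Ω := fun hmem => hy.2 (ball_subset_closedBall (hΩR hmem))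
    have hvy : v y = 0 := hout y hyΩ
    have hdlt : dist x₀ y < R + 1 := by rw [dist_comm]; exact mem_ball.mp hy.1
    have hdgt : R < dist x₀ y := by
      rw [dist_comm]
      by_contra hle; push_neg at hle
      exact hy.2 (mem_closedBall.mpr hle)
    have hd0 : 0 < dist x₀ y := by linarith
    have hpow : dist x₀ y ^ p ≤ (R+1) ^ p := Real.rpow_le_rpow hd0.le hdlt.le hp0.le
    have hdp : (0:ℝ) < dist x₀ y ^ p := Real.rpow_pos_of_pos hd0 _
    rw [hfdef]
    simp only [hvy, sub_zero]
    rw [div_le_div_iff₀ (by positivity) hdp]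
    calc M * dist x₀ y ^ p ≤ M * (R+1) ^ p := by
          apply mul_le_mul_of_nonneg_left hpow hM.le
      _ = v x₀ * (R+1) ^ p := rfl
  -- chain of integral bounds
  have hIA : c ≤ ∫ y in A, f y := by
    rw [hcdef]
    exact setIntegral_ge_of_const_le_real hAopen.measurableSet hAvollt.ne hfA
      ((hInt 1 one_pos).mono_set hA_sub)
  have hI1 : (∫ y in A, f y) ≤ ∫ y in {y | 1 < dist x₀ y}, f y :=
    setIntegral_mono_set (hInt 1 one_pos) (ae_of_all _ hfnonneg)
      (HasSubset.Subset.eventuallyLE hA_sub)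
  have hIε : ∀ ε ∈ Ioc (0:ℝ) 1, c ≤ ∫ y in {y | ε < dist x₀ y}, f y := by
    intro ε hε
    refine le_trans (hIA.trans hI1) ?_
    refine setIntegral_mono_set (hInt ε hε.1) (ae_of_all _ hfnonneg)
      (HasSubset.Subset.eventuallyLE ?_)
    intro y hy
    exact lt_of_le_of_lt hε.2 hy
  -- contradiction with tendsto
  have htend := hharm x₀ hx₀Ω
  unfold hasFracLapAt at htend
  rw [← hpdef, ← hMdef] at htend
  have h1 : ∀ᶠ ε in nhdsWithin (0:ℝ) (Ioi 0),
      (∫ y in {y | ε < dist x₀ y}, f y) < c := htend.eventually_lt_const hc0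
  have h2 : ∀ᶠ ε in nhdsWithin (0:ℝ) (Ioi 0), ε ∈ Ioc (0:ℝ) 1 := by
    filter_upwards [self_mem_nhdsWithin,
      eventually_nhdsWithin_of_eventually_nhds (eventually_le_nhds zero_lt_one)] with ε ha hb
    exact ⟨ha, hb⟩
  obtain ⟨ε, hlt, hmem⟩ := (h1.and h2).exists
  exact absurd (hIε ε hmem) (not_le.mpr hlt)

theorem stmt_17 (α : ℝ) (hα0 : 0 < α) (hα2 : α < 2) (n : ℕ) (hn : 1 ≤ n)
    (Ω : Set (EuclideanSpace ℝ (Fin n))) (hΩo : IsOpen Ω) (hΩb : Bornology.IsBounded Ω)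
    (v : EuclideanSpace ℝ (Fin n) → ℝ) (hc : Continuous v)
    (hout : ∀ x ∉ Ω, v x = 0)
    (hharm : ∀ x ∈ Ω, hasFracLapAt n α v x 0) :
    ∀ x, v x = 0 := by
  intro x
  have h1 := aux_max_principle α hα0 n hn Ω hΩo hΩb v hc hout hharm x
  have hneg : ∀ y ∈ Ω, hasFracLapAt n α (fun z => -v z) y 0 := by
    intro y hy
    have ht := hharm y hy
    unfold hasFracLapAt at ht ⊢
    have heq : (fun ε : ℝ => ∫ z in {z : EuclideanSpace ℝ (Fin n) | ε < dist y z},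
          ((fun z => -v z) y - (fun z => -v z) z) / dist y z ^ ((n:ℝ)+α))
        = fun ε : ℝ => -∫ z in {z : EuclideanSpace ℝ (Fin n) | ε < dist y z},
          (v y - v z) / dist y z ^ ((n:ℝ)+α) := by
      funext ε
      rw [← integral_neg]
      congr 1
      funext z
      simp only []
      ring
    rw [heq]
    simpa using ht.neg
  have h2 := aux_max_principle α hα0 n hn Ω hΩo hΩb (fun z => -v z) hc.neg
    (fun y hy => by simp [hout y hy]) hneg x
  simp only [neg_nonpos] at h2
  linarith
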